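/- (Part of the inequality chain of Remark 1) In the IRS-aided wireless-powered MEC system where each offloading sub-slot may use its own IRS beamforming vector, NOMA offloading is no better than TDMA offloading: R_NOMA^3 ≤ R_TDMA^3. -/

import Mathlib

open Finset

/-- Effective channel power gain of device `k` under IRS beamforming vector `v`. -/
noncomputable def gain {K N : ℕ} (h : Fin K → ℂ) (q : Fin K → Fin N → ℂ)
    (k : Fin K) (v : Fin N → ℂ) : ℝ :=
  ‖(starRingEnd ℂ) (h k) + ∑ n, (starRingEnd ℂ) (q k n) * v n‖ ^ 2

/-- Optimal computation rate of NOMA offloading with a possibly different IRS beamforming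
vector in each of the `K` offloading sub-slots (Case 3). -/
noncomputable def RNOMA3 {K N : ℕ} (h : Fin K → ℂ) (q : Fin K → Fin N → ℂ)
    (B T C γ η P σ2 : ℝ) : ℝ :=
  sSup {r : ℝ | ∃ (v₀ : Fin N → ℂ) (w : Fin K → Fin N → ℂ) (τ₀ : ℝ)
    (τ₁ : Fin K → ℝ) (p f : Fin K → ℝ),
    (∀ n, ‖v₀ n‖ = 1) ∧ (∀ i n, ‖w i n‖ = 1) ∧ 0 ≤ τ₀ ∧
    (∀ i, 0 ≤ τ₁ i) ∧ (∀ k, 0 ≤ p k) ∧ (∀ k, 0 ≤ f k) ∧ τ₀ + ∑ i, τ₁ i ≤ T ∧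
    (∀ k, (∑ i, τ₁ i) * p k + T * γ * f k ^ 3 ≤ τ₀ * η * P * gain h q k v₀) ∧
    r = B * ∑ i, τ₁ i * Real.logb 2 (1 + (∑ k, p k * gain h q k (w i)) / σ2)
        + ∑ k, T * f k / C}

/-- Optimal computation rate of TDMA offloading with a dedicated IRS beamforming vector in
each device's offloading slot (Case 3). -/
noncomputable def RTDMA3 {K N : ℕ} (h : Fin K → ℂ) (q : Fin K → Fin N → ℂ)
    (B T C γ η P σ2 : ℝ) : ℝ :=
  sSup {r : ℝ | ∃ (v₀ : Fin N → ℂ) (w : Fin K → Fin N → ℂ) (τ₀ : ℝ) (τ p f : Fin K → ℝ),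
    (∀ n, ‖v₀ n‖ = 1) ∧ (∀ k n, ‖w k n‖ = 1) ∧ 0 ≤ τ₀ ∧
    (∀ k, 0 ≤ τ k) ∧ (∀ k, 0 ≤ p k) ∧ (∀ k, 0 ≤ f k) ∧ τ₀ + ∑ k, τ k ≤ T ∧
    (∀ k, τ k * p k + T * γ * f k ^ 3 ≤ τ₀ * η * P * gain h q k v₀) ∧
    r = B * ∑ k, τ k * Real.logb 2 (1 + p k * gain h q k (w k) / σ2) + ∑ k, T * f k / C}

noncomputable def Gbound {K N : ℕ} (h : Fin K → ℂ) (q : Fin K → Fin N → ℂ) (k : Fin K) : ℝ :=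
  (‖h k‖ + ∑ n, ‖q k n‖) ^ 2

lemma gain_nonneg {K N : ℕ} (h : Fin K → ℂ) (q : Fin K → Fin N → ℂ)
    (k : Fin K) (v : Fin N → ℂ) : 0 ≤ gain h q k v :=
  pow_nonneg (norm_nonneg _) 2

lemma Gbound_nonneg {K N : ℕ} (h : Fin K → ℂ) (q : Fin K → Fin N → ℂ) (k : Fin K) :
    0 ≤ Gbound h q k := sq_nonneg _

lemma gain_le_Gbound {K N : ℕ} (h : Fin K → ℂ) (q : Fin K → Fin N → ℂ)
    (k : Fin K) (v : Fin N → ℂ) (hv : ∀ n, ‖v n‖ = 1) :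
    gain h q k v ≤ Gbound h q k := by
  have habs : ‖(starRingEnd ℂ) (h k) + ∑ n, (starRingEnd ℂ) (q k n) * v n‖
      ≤ ‖h k‖ + ∑ n, ‖q k n‖ := by
    refine (norm_add_le _ _).trans ?_
    rw [Complex.norm_conj]
    gcongr
    refine (norm_sum_le _ _).trans (le_of_eq (Finset.sum_congr rfl fun n _ => ?_))
    rw [norm_mul, Complex.norm_conj, hv, mul_one]
  exact pow_le_pow_left₀ (norm_nonneg _) habs 2

lemma logb_two_le {x : ℝ} (hx : 0 ≤ x) : Real.logb 2 (1 + x) ≤ x / Real.log 2 := by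
  rw [Real.logb]
  have h1 : Real.log (1 + x) ≤ x := by
    have := Real.log_le_sub_one_of_pos (x := 1 + x) (by linarith)
    linarith
  exact div_le_div_of_nonneg_right h1 (Real.log_pos one_lt_two).le

lemma tdma_bddAbove {K N : ℕ} (h : Fin K → ℂ) (q : Fin K → Fin N → ℂ)
    (B T C γ η P σ2 : ℝ) (hB : 0 < B) (hT : 0 < T) (hC : 0 < C) (hγ : 0 < γ)
    (hη : 0 < η) (hP : 0 < P) (hσ : 0 < σ2) :
    BddAbove {r : ℝ | ∃ (v₀ : Fin N → ℂ) (w : Fin K → Fin N → ℂ) (τ₀ : ℝ) (τ p f : Fin K → ℝ),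
    (∀ n, ‖v₀ n‖ = 1) ∧ (∀ k n, ‖w k n‖ = 1) ∧ 0 ≤ τ₀ ∧
    (∀ k, 0 ≤ τ k) ∧ (∀ k, 0 ≤ p k) ∧ (∀ k, 0 ≤ f k) ∧ τ₀ + ∑ k, τ k ≤ T ∧
    (∀ k, τ k * p k + T * γ * f k ^ 3 ≤ τ₀ * η * P * gain h q k v₀) ∧
    r = B * ∑ k, τ k * Real.logb 2 (1 + p k * gain h q k (w k) / σ2) + ∑ k, T * f k / C} := by
  refine ⟨B * (∑ k, T * η * P * Gbound h q k * Gbound h q k / (σ2 * Real.log 2))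
      + ∑ k, T * max 1 (η * P * Gbound h q k / γ) / C, ?_⟩
  rintro r ⟨v₀, w, τ₀, τ, p, f, hv₀, hw, hτ₀, hτ, hp, hf, htime, hen, rfl⟩
  have hτ₀T : τ₀ ≤ T := by
    have : 0 ≤ ∑ k, τ k := Finset.sum_nonneg fun k _ => hτ k
    linarith
  have hE : ∀ k, τ₀ * η * P * gain h q k v₀ ≤ T * η * P * Gbound h q k := by
    intro k
    have h1 := gain_le_Gbound h q k v₀ hv₀
    have h2 := gain_nonneg h q k v₀
    have h3 := Gbound_nonneg h q k
    nlinarith [mul_le_mul hτ₀T h1 h2 hT.le, mul_pos hη hP]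
  gcongr with k hk k hk
  · -- rate terms
    have hg := gain_nonneg h q k (w k)
    have hG := Gbound_nonneg h q k
    have hgG := gain_le_Gbound h q k (w k) (hw k)
    have hx : 0 ≤ p k * gain h q k (w k) / σ2 := div_nonneg (mul_nonneg (hp k) hg) hσ.le
    have hlog := logb_two_le hx
    have hτp : τ k * p k ≤ T * η * P * Gbound h q k := by
      have := hen k
      have h4 := hE k
      have h5 : 0 ≤ T * γ * f k ^ 3 :=
        mul_nonneg (mul_nonneg hT.le hγ.le) (pow_nonneg (hf k) 3)
      linarith
    calc τ k * Real.logb 2 (1 + p k * gain h q k (w k) / σ2)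
        ≤ τ k * (p k * gain h q k (w k) / σ2 / Real.log 2) :=
          mul_le_mul_of_nonneg_left hlog (hτ k)
      _ = τ k * p k * gain h q k (w k) / (σ2 * Real.log 2) := by ring
      _ ≤ T * η * P * Gbound h q k * Gbound h q k / (σ2 * Real.log 2) := by
          have hd : (0:ℝ) < σ2 * Real.log 2 :=
            mul_pos hσ (Real.log_pos one_lt_two)
          apply div_le_div_of_nonneg_right _ hd.le
          have h0 : 0 ≤ τ k * p k := mul_nonneg (hτ k) (hp k)
          nlinarith
  · -- computation terms
    have hfk : f k ≤ max 1 (η * P * Gbound h q k / γ) := by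
      have h4 := hE k
      have h5 := hen k
      have hcube : f k ^ 3 ≤ η * P * Gbound h q k / γ := by
        rw [le_div_iff₀ hγ]
        have h6 : 0 ≤ τ k * p k := mul_nonneg (hτ k) (hp k)
        nlinarith
      rcases le_or_gt (f k) 1 with h7 | h7
      · exact h7.trans (le_max_left _ _)
      · refine le_trans ?_ (le_trans hcube (le_max_right _ _))
        have h8 : 1 ≤ f k ^ 2 := by nlinarith
        nlinarith [mul_le_mul_of_nonneg_left h8 (by linarith : (0:ℝ) ≤ f k)]
    exact hfk

/-- Remark 1 (part of the inequality chain): `R_NOMA^{case3} ≤ R_TDMA^{case3}`. -/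
theorem RNOMA3_le_RTDMA3 {K N : ℕ} (hK : 1 ≤ K) (hN : 1 ≤ N)
    (h : Fin K → ℂ) (q : Fin K → Fin N → ℂ) (B T C γ η P σ2 : ℝ)
    (hB : 0 < B) (hT : 0 < T) (hC : 0 < C) (hγ : 0 < γ)
    (hη : 0 < η) (hP : 0 < P) (hσ : 0 < σ2) :
    RNOMA3 h q B T C γ η P σ2 ≤ RTDMA3 h q B T C γ η P σ2 := by
  have hbdd := tdma_bddAbove h q B T C γ η P σ2 hB hT hC hγ hη hP hσ
  rw [RNOMA3, RTDMA3]
  have h0mem : (0:ℝ) ∈ {r : ℝ | ∃ (v₀ : Fin N → ℂ) (w : Fin K → Fin N → ℂ) (τ₀ : ℝ)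
      (τ p f : Fin K → ℝ),
      (∀ n, ‖v₀ n‖ = 1) ∧ (∀ k n, ‖w k n‖ = 1) ∧ 0 ≤ τ₀ ∧
      (∀ k, 0 ≤ τ k) ∧ (∀ k, 0 ≤ p k) ∧ (∀ k, 0 ≤ f k) ∧ τ₀ + ∑ k, τ k ≤ T ∧
      (∀ k, τ k * p k + T * γ * f k ^ 3 ≤ τ₀ * η * P * gain h q k v₀) ∧
      r = B * ∑ k, τ k * Real.logb 2 (1 + p k * gain h q k (w k) / σ2)
        + ∑ k, T * f k / C} := by
    refine ⟨fun _ => 1, fun _ _ => 1, 0, fun _ => 0, fun _ => 0, fun _ => 0,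
      by simp, by simp, le_refl 0, fun _ => le_refl 0, fun _ => le_refl 0,
      fun _ => le_refl 0, by simpa using hT.le, fun k => by
        simpa using mul_nonneg (mul_nonneg (mul_nonneg (le_refl (0:ℝ)) hη.le) hP.le)
          (gain_nonneg h q k _), by simp⟩
  refine Real.sSup_le ?_ (le_csSup hbdd h0mem)
  rintro r ⟨v₀, w, τ₀, τ₁, p, f, hv₀, hw, hτ₀, hτ₁, hp, hf, htime, hen, rfl⟩
  -- best beamforming vector per device
  have hmax : ∀ k : Fin K, ∃ j : Fin K, ∀ i : Fin K,
      gain h q k (w i) ≤ gain h q k (w j) := by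
    intro k
    obtain ⟨j, -, hj⟩ := Finset.exists_max_image Finset.univ (fun i => gain h q k (w i))
      ⟨⟨0, hK⟩, Finset.mem_univ _⟩
    exact ⟨j, fun i => hj i (Finset.mem_univ i)⟩
  choose ik hik using hmax
  set s : ℝ := ∑ i, τ₁ i with hs
  have hs0 : 0 ≤ s := Finset.sum_nonneg fun i _ => hτ₁ i
  set g'' : Fin K → ℝ := fun k => gain h q k (w (ik k)) with hg''
  have hg0 : ∀ k, 0 ≤ g'' k := fun k => gain_nonneg h q k _
  set S : ℝ := ∑ k, p k * g'' k with hS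
  have hS0 : 0 ≤ S := Finset.sum_nonneg fun k _ => mul_nonneg (hp k) (hg0 k)
  set τ' : Fin K → ℝ := fun k => s * (p k * g'' k) / S with hτ'def
  set p' : Fin K → ℝ := fun k => if p k * g'' k = 0 then 0 else S / g'' k with hp'def
  have hτ'0 : ∀ k, 0 ≤ τ' k := fun k =>
    div_nonneg (mul_nonneg hs0 (mul_nonneg (hp k) (hg0 k))) hS0
  have hp'0 : ∀ k, 0 ≤ p' k := by
    intro k
    simp only [hp'def]
    split
    · exact le_refl 0
    · exact div_nonneg hS0 (hg0 k)
  have hτ'sum' : S ≠ 0 → ∑ k, τ' k = s := by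
    intro hz
    simp only [hτ'def]
    rw [← Finset.sum_div, ← Finset.mul_sum, ← hS, mul_div_assoc, div_self hz, mul_one]
  have hτ'sum : ∑ k, τ' k ≤ s := by
    by_cases hz : S = 0
    · simp only [hτ'def, hz, div_zero]
      simpa using hs0
    · exact le_of_eq (hτ'sum' hz)
  have hgk_ne : ∀ k, p k * g'' k ≠ 0 → g'' k ≠ 0 := by
    intro k hk hg
    exact hk (by rw [hg, mul_zero])
  have hprod : ∀ k, τ' k * p' k ≤ s * p k := by
    intro k
    by_cases hk : p k * g'' k = 0
    · simp only [hp'def, if_pos hk, mul_zero]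
      exact mul_nonneg hs0 (hp k)
    · have hzS : S ≠ 0 := by
        intro hz
        exact hk ((Finset.sum_eq_zero_iff_of_nonneg
          (fun k _ => mul_nonneg (hp k) (hg0 k))).mp (hS.symm.trans hz) k (Finset.mem_univ k))
      have hgk := hgk_ne k hk
      have : τ' k * p' k = s * p k := by
        simp only [hτ'def, hp'def, if_neg hk]
        field_simp
      linarith
  have htime' : τ₀ + ∑ k, τ' k ≤ T := by linarith
  have hen' : ∀ k, τ' k * p' k + T * γ * f k ^ 3 ≤ τ₀ * η * P * gain h q k v₀ := by
    intro k
    have h1 := hen k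
    have h2 := hprod k
    linarith
  refine le_trans ?_ (le_csSup hbdd ⟨v₀, fun k => w (ik k), τ₀, τ', p', f, hv₀,
    fun k n => hw (ik k) n, hτ₀, hτ'0, hp'0, hf, htime', hen', rfl⟩)
  have key : ∑ i, τ₁ i * Real.logb 2 (1 + (∑ k, p k * gain h q k (w i)) / σ2)
      ≤ ∑ k, τ' k * Real.logb 2 (1 + p' k * gain h q k (w (ik k)) / σ2) := by
    have hL : ∀ k, τ' k * Real.logb 2 (1 + p' k * g'' k / σ2)
        = τ' k * Real.logb 2 (1 + S / σ2) := by
      intro k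
      by_cases hk : p k * g'' k = 0
      · have hτk : τ' k = 0 := by simp [hτ'def, hk]
        simp [hτk]
      · have hgk := hgk_ne k hk
        simp only [hp'def, if_neg hk, div_mul_cancel₀ _ hgk]
    calc ∑ i, τ₁ i * Real.logb 2 (1 + (∑ k, p k * gain h q k (w i)) / σ2)
        ≤ ∑ i, τ₁ i * Real.logb 2 (1 + S / σ2) := by
          refine Finset.sum_le_sum fun i _ => ?_
          refine mul_le_mul_of_nonneg_left ?_ (hτ₁ i)
          have hAi : 0 ≤ ∑ k, p k * gain h q k (w i) :=
            Finset.sum_nonneg fun k _ => mul_nonneg (hp k) (gain_nonneg h q k _)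
          have hAS : ∑ k, p k * gain h q k (w i) ≤ S := by
            rw [hS]
            exact Finset.sum_le_sum fun k _ =>
              mul_le_mul_of_nonneg_left (hik k i) (hp k)
          have hx : (0:ℝ) < 1 + (∑ k, p k * gain h q k (w i)) / σ2 := by
            have : 0 ≤ (∑ k, p k * gain h q k (w i)) / σ2 := div_nonneg hAi hσ.le
            linarith
          refine Real.logb_le_logb_of_le one_lt_two hx ?_
          gcongr
      _ = s * Real.logb 2 (1 + S / σ2) := by rw [hs, Finset.sum_mul]
      _ = (∑ k, τ' k) * Real.logb 2 (1 + S / σ2) := by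
          by_cases hz : S = 0
          · simp [hz]
          · rw [hτ'sum' hz]
      _ = ∑ k, τ' k * Real.logb 2 (1 + S / σ2) := by rw [Finset.sum_mul]
      _ = ∑ k, τ' k * Real.logb 2 (1 + p' k * gain h q k (w (ik k)) / σ2) :=
          Finset.sum_congr rfl fun k _ => (hL k).symm
  have hBkey := mul_le_mul_of_nonneg_left key hB.le
  linarith
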